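/- Let p be an odd prime and let Z ⊆ ℤ/pℤ with 0 ∈ Z and |Z| < (p+9)/4. If c_d(Z) ≤ 2 for some nonzero d ∈ ℤ/pℤ, then there exist u, v ∈ ℤ/pℤ with u ≠ 0 such that u·Z + v ⊆ {0, 1, …, (p−1)/2} (the image in ℤ/pℤ of the integers 0 through (p−1)/2). -/

import Mathlib

open Pointwise

/-- The cardinality of the smallest arithmetic progression with difference `r`
containing `X`, i.e. the least `n` such that `X ⊆ {a, a+r, …, a+(n-1)r}` for some `a`. -/
noncomputable def ell (p : ℕ) (r : ZMod p) (X : Finset (ZMod p)) : ℕ :=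
  sInf {n : ℕ | ∃ a : ZMod p, X ⊆ (Finset.range n).image (fun i => a + (i : ℕ) • r)}

/-- `C` is an arithmetic progression of difference `d` in `ZMod p`. -/
def IsAP (p : ℕ) (d : ZMod p) (C : Finset (ZMod p)) : Prop :=
  ∃ a : ZMod p, ∃ n : ℕ, C = (Finset.range n).image (fun i => a + (i : ℕ) • d)

/-- `C` is a `d`-component of `Z`: a maximal arithmetic progression of
difference `d` contained in `Z`. -/
def IsComponent (p : ℕ) (d : ZMod p) (Z C : Finset (ZMod p)) : Prop :=
  C.Nonempty ∧ IsAP p d C ∧ C ⊆ Z ∧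
    ∀ C' : Finset (ZMod p), IsAP p d C' → C' ⊆ Z → C ⊆ C' → C' = C

/-- `c_d(Z)`, the number of `d`-components of `Z`. -/
noncomputable def numComponents (p : ℕ) (d : ZMod p) (Z : Finset (ZMod p)) : ℕ :=
  {C : Finset (ZMod p) | IsComponent p d Z C}.ncard

open Classical in
/-- The `k`-th isoperimetric number `κ_k(B)`, with the convention `min ∅ = p`. -/
noncomputable def kappa (p k : ℕ) (B : Finset (ZMod p)) : ℕ :=
  if ({n : ℕ | ∃ X : Finset (ZMod p),
        k ≤ X.card ∧ (X + B).card ≤ p - k ∧ (X + B).card - X.card = n}).Nonempty then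
    sInf {n : ℕ | ∃ X : Finset (ZMod p),
        k ≤ X.card ∧ (X + B).card ≤ p - k ∧ (X + B).card - X.card = n}
  else p

/-- `X` is a `k`-fragment of `B`. -/
def IsFragment (p k : ℕ) (B X : Finset (ZMod p)) : Prop :=
  k ≤ X.card ∧ (X + B).card ≤ p - k ∧ (X + B).card - X.card = kappa p k B

/-- `A` is a `k`-atom of `B`: a `k`-fragment of minimal cardinality. -/
def IsAtom' (p k : ℕ) (B A : Finset (ZMod p)) : Prop :=
  IsFragment p k B A ∧ ∀ X : Finset (ZMod p), IsFragment p k B X → A.card ≤ X.card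

/-- The `i`-fold sumset `iY = Y + ⋯ + Y`. -/
def itSum (p : ℕ) (Y : Finset (ZMod p)) : ℕ → Finset (ZMod p)
  | 0 => {0}
  | n + 1 => itSum p Y n + Y

/-- `N_i(X,Y)`: `N_0 = X`, and `N_i = (X + iY) \ (X + (i-1)Y)` for `i ≥ 1`. -/
def Nset (p : ℕ) (X Y : Finset (ZMod p)) : ℕ → Finset (ZMod p)
  | 0 => X
  | i + 1 => (X + itSum p Y (i + 1)) \ (X + itSum p Y i)

/-- `N_i^U(X,Y)`: the elements `z ∈ N_i` with `z - U ⊆ N_{i-1}` and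
`(z - (Y \ U)) ∩ N_{i-1} = ∅`. -/
def NsetU (p : ℕ) (X Y U : Finset (ZMod p)) (i : ℕ) : Finset (ZMod p) :=
  (Nset p X Y i).filter fun z =>
    (∀ u ∈ U, z - u ∈ Nset p X Y (i - 1)) ∧ ∀ y ∈ Y \ U, z - y ∉ Nset p X Y (i - 1)

/-- `N_i^{⊆U}(X,Y) = ⋃_{V ⊆ U} N_i^V(X,Y)`. -/
def NsetSub (p : ℕ) (X Y U : Finset (ZMod p)) (i : ℕ) : Finset (ZMod p) :=
  U.powerset.biUnion fun V => NsetU p X Y V i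

section AuxStatement17

open Finset

private lemma st17_nsmul_sub {p : ℕ} (d : ZMod p) {A B : ℕ} (h : B ≤ A) :
    (A - B) • d = A • d - B • d := by
  rw [nsmul_eq_mul, nsmul_eq_mul, nsmul_eq_mul, Nat.cast_sub h, sub_mul]

private lemma st17_exists_component (p : ℕ) (d : ZMod p) (Z : Finset (ZMod p)) {z : ZMod p}
    (hz : z ∈ Z) : ∃ C, IsComponent p d Z C ∧ z ∈ C := by
  classical
  set S := Z.powerset.filter (fun C => IsAP p d C ∧ z ∈ C) with hS
  have hzS : ({z} : Finset (ZMod p)) ∈ S := by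
    simp only [hS, Finset.mem_filter, Finset.mem_powerset, Finset.singleton_subset_iff,
      Finset.mem_singleton]
    refine ⟨hz, ⟨z, 1, ?_⟩, by simp⟩
    simp
  obtain ⟨C, hCS, hmax⟩ := S.exists_max_image Finset.card ⟨_, hzS⟩
  simp only [hS, Finset.mem_filter, Finset.mem_powerset] at hCS
  obtain ⟨hCZ, hAP, hzC⟩ := hCS
  refine ⟨C, ⟨⟨z, hzC⟩, hAP, hCZ, ?_⟩, hzC⟩
  intro C' hAP' hC'Z hsub
  have hC'S : C' ∈ S := by
    simp only [hS, Finset.mem_filter, Finset.mem_powerset]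
    exact ⟨hC'Z, hAP', hsub hzC⟩
  exact (Finset.eq_of_subset_of_card_le hsub (hmax C' hC'S)).symm

private lemma st17_component_eq {p : ℕ} {d : ZMod p} {Z C C' : Finset (ZMod p)}
    (hC : IsComponent p d Z C) (hC' : IsComponent p d Z C')
    {x : ZMod p} (hx : x ∈ C) (hx' : x ∈ C') : C = C' := by
  obtain ⟨hCne, ⟨a, m, hCeq⟩, hCZ, hCmax⟩ := hC
  obtain ⟨hC'ne, ⟨a', n, hC'eq⟩, hC'Z, hC'max⟩ := hC'
  obtain ⟨i₀, hi₀, hxi⟩ := Finset.mem_image.1 (hCeq ▸ hx)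
  obtain ⟨j₀, hj₀, hxj⟩ := Finset.mem_image.1 (hC'eq ▸ hx')
  rw [Finset.mem_range] at hi₀ hj₀
  set M := max i₀ j₀ with hM
  set K := max (m - 1 - i₀) (n - 1 - j₀) with hK
  have hMi : i₀ ≤ M := le_max_left _ _
  have hMj : j₀ ≤ M := le_max_right _ _
  have hKi : m - 1 - i₀ ≤ K := le_max_left _ _
  have hKj : n - 1 - j₀ ≤ K := le_max_right _ _
  have hMc : M = i₀ ∨ M = j₀ := max_choice _ _
  set D := (Finset.range (M + K + 1)).image (fun k => (x - M • d) + (k : ℕ) • d) with hD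
  have keyC : ∀ i, M ≤ i₀ + i → a + ((i₀ + i - M : ℕ)) • d = (x - M • d) + (i : ℕ) • d := by
    intro i hi
    rw [st17_nsmul_sub d hi, add_nsmul, ← hxi]
    ring
  have keyC' : ∀ j, M ≤ j₀ + j → a' + ((j₀ + j - M : ℕ)) • d = (x - M • d) + (j : ℕ) • d := by
    intro j hj
    rw [st17_nsmul_sub d hj, add_nsmul, ← hxj]
    ring
  have hCD : C ⊆ D := by
    intro y hy
    rw [hCeq] at hy
    obtain ⟨i, hi, rfl⟩ := Finset.mem_image.1 hy
    rw [Finset.mem_range] at hi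
    refine Finset.mem_image.2 ⟨M - i₀ + i, Finset.mem_range.2 (by omega), ?_⟩
    have h1 : M ≤ i₀ + (M - i₀ + i) := by omega
    have h2 : i₀ + (M - i₀ + i) - M = i := by omega
    rw [← keyC _ h1, h2]
  have hC'D : C' ⊆ D := by
    intro y hy
    rw [hC'eq] at hy
    obtain ⟨j, hj, rfl⟩ := Finset.mem_image.1 hy
    rw [Finset.mem_range] at hj
    refine Finset.mem_image.2 ⟨M - j₀ + j, Finset.mem_range.2 (by omega), ?_⟩
    have h1 : M ≤ j₀ + (M - j₀ + j) := by omega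
    have h2 : j₀ + (M - j₀ + j) - M = j := by omega
    rw [← keyC' _ h1, h2]
  have hDZ : D ⊆ Z := by
    intro y hy
    obtain ⟨k, hk, rfl⟩ := Finset.mem_image.1 hy
    rw [Finset.mem_range] at hk
    rcases (by omega : (M ≤ i₀ + k ∧ i₀ + k < M + m) ∨ (M ≤ j₀ + k ∧ j₀ + k < M + n)) with
      ⟨h1, h2⟩ | ⟨h1, h2⟩
    · apply hCZ
      rw [hCeq]
      exact Finset.mem_image.2 ⟨i₀ + k - M, Finset.mem_range.2 (by omega), keyC k h1⟩
    · apply hC'Z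
      rw [hC'eq]
      exact Finset.mem_image.2 ⟨j₀ + k - M, Finset.mem_range.2 (by omega), keyC' k h1⟩
  have e1 : D = C := hCmax D ⟨_, _, rfl⟩ hDZ hCD
  have e2 : D = C' := hC'max D ⟨_, _, rfl⟩ hDZ hC'D
  rw [← e1, e2]

private lemma st17_component_structure (p : ℕ) [Fact p.Prime] {d : ZMod p} (hd0 : d ≠ 0)
    {Z C : Finset (ZMod p)} (hZp : Z.card < p) (hC : IsComponent p d Z C) :
    ∃ a n, 1 ≤ n ∧ n < p ∧ C.card = n ∧
      C = (Finset.range n).image (fun i => a + (i : ℕ) • d) := by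
  haveI : NeZero p := ⟨(Fact.out : p.Prime).ne_zero⟩
  obtain ⟨hne, ⟨a, n, hCeq⟩, hCZ, -⟩ := hC
  have hnp : n < p := by
    by_contra h
    push_neg at h
    have huniv : ∀ y : ZMod p, y ∈ C := by
      intro y
      rw [hCeq]
      refine Finset.mem_image.2 ⟨((y - a) * d⁻¹).val,
        Finset.mem_range.2 (lt_of_lt_of_le (ZMod.val_lt _) h), ?_⟩
      rw [nsmul_eq_mul, ZMod.natCast_rightInverse _]
      field_simp
      ring
    have hsub : (Finset.univ : Finset (ZMod p)) ⊆ C := fun y _ => huniv y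
    have h1 : p ≤ C.card := by
      have := Finset.card_le_card hsub
      rwa [Finset.card_univ, ZMod.card p] at this
    have := Finset.card_le_card hCZ
    omega
  have hinj : Set.InjOn (fun i : ℕ => a + (i : ℕ) • d) (Finset.range n) := by
    intro i hi j hj hij
    simp only [Finset.coe_range, Set.mem_Iio] at hi hj
    simp only [nsmul_eq_mul, add_right_inj] at hij
    have h2 : ((i : ℕ) : ZMod p) = ((j : ℕ) : ZMod p) := mul_right_cancel₀ hd0 hij
    have h3 := congrArg ZMod.val h2
    rwa [ZMod.val_cast_of_lt (lt_trans hi hnp), ZMod.val_cast_of_lt (lt_trans hj hnp)] at h3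
  have hn1 : 1 ≤ n := by
    obtain ⟨z, hz⟩ := hne
    rw [hCeq] at hz
    obtain ⟨i, hi, -⟩ := Finset.mem_image.1 hz
    rw [Finset.mem_range] at hi
    omega
  refine ⟨a, n, hn1, hnp, ?_, hCeq⟩
  rw [hCeq, Finset.card_image_of_injOn hinj, Finset.card_range]

private lemma st17_fit (p : ℕ) [Fact p.Prime] (hp2 : p % 2 = 1) {d : ZMod p} (hd0 : d ≠ 0)
    (a : ZMod p) (m n t : ℕ) (hm : 1 ≤ m) (hn : 1 ≤ n) (hmt : m ≤ t) (htn : t + n ≤ p)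
    (Z : Finset (ZMod p)) (hmn : 4 * (m + n) < p + 9)
    (hcov : ∀ z ∈ Z, (∃ i, i < m ∧ z = a + (i : ℕ) • d) ∨
      (∃ j, j < n ∧ z = a + ((t + j : ℕ)) • d)) :
    ∃ u v : ZMod p, u ≠ 0 ∧ ∀ z ∈ Z,
      u * z + v ∈ (Finset.range ((p - 1) / 2 + 1)).image (Nat.cast : ℕ → ZMod p) := by
  have hp3 : 3 ≤ p := by
    have := (Fact.out : p.Prime).two_le
    omega
  have hdd : d⁻¹ * d = 1 := inv_mul_cancel₀ hd0
  have memT : ∀ V : ℕ, V < (p - 1) / 2 + 1 →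
      ((V : ℕ) : ZMod p) ∈ (Finset.range ((p - 1) / 2 + 1)).image (Nat.cast : ℕ → ZMod p) :=
    fun V hV => Finset.mem_image_of_mem _ (Finset.mem_range.2 hV)
  by_cases hB1 : (p - 1) / 2 ≤ p - t - n
  · refine ⟨d⁻¹, -(d⁻¹ * a), inv_ne_zero hd0, ?_⟩
    intro z hz
    rcases hcov z hz with ⟨i, hi, rfl⟩ | ⟨j, hj, rfl⟩
    · have he : d⁻¹ * (a + (i : ℕ) • d) + -(d⁻¹ * a) = ((i : ℕ) : ZMod p) := by
        rw [nsmul_eq_mul]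
        linear_combination ((i : ℕ) : ZMod p) * hdd
      rw [he]
      exact memT i (by omega)
    · have he : d⁻¹ * (a + ((t + j : ℕ)) • d) + -(d⁻¹ * a) = (((t + j : ℕ)) : ZMod p) := by
        rw [nsmul_eq_mul]
        linear_combination (((t + j : ℕ)) : ZMod p) * hdd
      rw [he]
      exact memT (t + j) (by omega)
  · by_cases hB2 : (p - 1) / 2 ≤ t - m
    · refine ⟨d⁻¹, -(d⁻¹ * a) - ((t : ℕ) : ZMod p), inv_ne_zero hd0, ?_⟩
      intro z hz
      rcases hcov z hz with ⟨i, hi, rfl⟩ | ⟨j, hj, rfl⟩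
      · have he : d⁻¹ * (a + (i : ℕ) • d) + (-(d⁻¹ * a) - ((t : ℕ) : ZMod p)) =
            (((i + p - t : ℕ)) : ZMod p) := by
          have h1 : t ≤ i + p := by omega
          rw [nsmul_eq_mul, Nat.cast_sub h1]
          push_cast [ZMod.natCast_self]
          linear_combination ((i : ℕ) : ZMod p) * hdd
        rw [he]
        exact memT (i + p - t) (by omega)
      · have he : d⁻¹ * (a + ((t + j : ℕ)) • d) + (-(d⁻¹ * a) - ((t : ℕ) : ZMod p)) =
            ((j : ℕ) : ZMod p) := by
          rw [nsmul_eq_mul]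
          push_cast
          linear_combination (((t : ℕ) : ZMod p) + ((j : ℕ) : ZMod p)) * hdd
        rw [he]
        exact memT j (by omega)
    · have h2ne : (2 : ZMod p) ≠ 0 := by
        intro h
        have h2 : ((2 : ℕ) : ZMod p) = 0 := by push_cast; exact h
        rw [ZMod.natCast_eq_zero_iff] at h2
        have := Nat.le_of_dvd (by norm_num) h2
        omega
      have hu : (2 : ZMod p) * d⁻¹ ≠ 0 := mul_ne_zero h2ne (inv_ne_zero hd0)
      by_cases h2t : 2 * t < p
      · refine ⟨2 * d⁻¹, -(2 * d⁻¹ * a) - 2 * ((t : ℕ) : ZMod p), hu, ?_⟩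
        intro z hz
        rcases hcov z hz with ⟨i, hi, rfl⟩ | ⟨j, hj, rfl⟩
        · have he : 2 * d⁻¹ * (a + (i : ℕ) • d) + (-(2 * d⁻¹ * a) - 2 * ((t : ℕ) : ZMod p)) =
              (((2 * i + p - 2 * t : ℕ)) : ZMod p) := by
            have h1 : 2 * t ≤ 2 * i + p := by omega
            rw [nsmul_eq_mul, Nat.cast_sub h1]
            push_cast [ZMod.natCast_self]
            linear_combination (2 * ((i : ℕ) : ZMod p)) * hdd
          rw [he]
          exact memT (2 * i + p - 2 * t) (by omega)
        · have he : 2 * d⁻¹ * (a + ((t + j : ℕ)) • d) +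
              (-(2 * d⁻¹ * a) - 2 * ((t : ℕ) : ZMod p)) = (((2 * j : ℕ)) : ZMod p) := by
            rw [nsmul_eq_mul]
            push_cast
            linear_combination (2 * (((t : ℕ) : ZMod p) + ((j : ℕ) : ZMod p))) * hdd
          rw [he]
          exact memT (2 * j) (by omega)
      · refine ⟨2 * d⁻¹, -(2 * d⁻¹ * a), hu, ?_⟩
        intro z hz
        rcases hcov z hz with ⟨i, hi, rfl⟩ | ⟨j, hj, rfl⟩
        · have he : 2 * d⁻¹ * (a + (i : ℕ) • d) + -(2 * d⁻¹ * a) =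
              (((2 * i : ℕ)) : ZMod p) := by
            rw [nsmul_eq_mul]
            push_cast
            linear_combination (2 * ((i : ℕ) : ZMod p)) * hdd
          rw [he]
          exact memT (2 * i) (by omega)
        · have he : 2 * d⁻¹ * (a + ((t + j : ℕ)) • d) + -(2 * d⁻¹ * a) =
              (((2 * t + 2 * j - p : ℕ)) : ZMod p) := by
            have h1 : p ≤ 2 * t + 2 * j := by omega
            rw [nsmul_eq_mul, Nat.cast_sub h1]
            push_cast [ZMod.natCast_self]
            linear_combination (2 * (((t : ℕ) : ZMod p) + ((j : ℕ) : ZMod p))) * hdd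
          rw [he]
          exact memT (2 * t + 2 * j - p) (by omega)

end AuxStatement17

theorem statement_17 (p : ℕ) (hp : p.Prime) (hodd : Odd p)
    (Z : Finset (ZMod p)) (h0Z : (0 : ZMod p) ∈ Z)
    (hZcard : 4 * Z.card < p + 9)
    (hd : ∃ d : ZMod p, d ≠ 0 ∧ numComponents p d Z ≤ 2) :
    ∃ u v : ZMod p, u ≠ 0 ∧ ∀ z ∈ Z,
      u * z + v ∈ (Finset.range ((p - 1) / 2 + 1)).image (Nat.cast : ℕ → ZMod p) := by
  obtain ⟨d, hd0, hc⟩ := hd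
  haveI : Fact p.Prime := ⟨hp⟩
  haveI : NeZero p := ⟨hp.ne_zero⟩
  have hp2 : p % 2 = 1 := Nat.odd_iff.mp hodd
  have hp3 : 3 ≤ p := by
    have := hp.two_le
    omega
  have hZp : Z.card < p := by omega
  obtain ⟨C₁, hC₁, h0C₁⟩ := st17_exists_component p d Z h0Z
  obtain ⟨a, m, hm1, hmp, hC₁card, hC₁eq⟩ := st17_component_structure p hd0 hZp hC₁
  have hC₁Z : C₁ ⊆ Z := hC₁.2.2.1
  by_cases hone : ∀ z ∈ Z, z ∈ C₁
  · -- single component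
    have hmcard : m ≤ Z.card := hC₁card ▸ Finset.card_le_card hC₁Z
    have hdd : d⁻¹ * d = 1 := inv_mul_cancel₀ hd0
    refine ⟨d⁻¹, -(d⁻¹ * a), inv_ne_zero hd0, ?_⟩
    intro z hz
    have hzC : z ∈ C₁ := hone z hz
    rw [hC₁eq] at hzC
    obtain ⟨i, hi, rfl⟩ := Finset.mem_image.1 hzC
    rw [Finset.mem_range] at hi
    have he : d⁻¹ * (a + (i : ℕ) • d) + -(d⁻¹ * a) = ((i : ℕ) : ZMod p) := by
      rw [nsmul_eq_mul]
      linear_combination ((i : ℕ) : ZMod p) * hdd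
    rw [he]
    exact Finset.mem_image_of_mem _ (Finset.mem_range.2 (by omega))
  · push_neg at hone
    obtain ⟨z₁, hz₁Z, hz₁C⟩ := hone
    obtain ⟨C₂, hC₂, hz₁C₂⟩ := st17_exists_component p d Z hz₁Z
    have hC₂Z : C₂ ⊆ Z := hC₂.2.2.1
    have hne : C₁ ≠ C₂ := fun h => hz₁C (h ▸ hz₁C₂)
    have hdisj : Disjoint C₁ C₂ := by
      rw [Finset.disjoint_left]
      intro x hx1 hx2
      exact hne (st17_component_eq hC₁ hC₂ hx1 hx2)
    obtain ⟨b, n, hn1, hnp, hC₂card, hC₂eq⟩ := st17_component_structure p hd0 hZp hC₂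
    -- coverage by the two components
    have hcov2 : ∀ z ∈ Z, z ∈ C₁ ∨ z ∈ C₂ := by
      intro z hz
      by_contra h
      push_neg at h
      obtain ⟨C₃, hC₃, hzC₃⟩ := st17_exists_component p d Z hz
      have h31 : C₃ ≠ C₁ := fun e => h.1 (e ▸ hzC₃)
      have h32 : C₃ ≠ C₂ := fun e => h.2 (e ▸ hzC₃)
      have hsub : ({C₁, C₂, C₃} : Set (Finset (ZMod p))) ⊆
          {C : Finset (ZMod p) | IsComponent p d Z C} := by
        intro C hC
        rcases hC with rfl | rfl | rfl
        · exact hC₁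
        · exact hC₂
        · exact hC₃
      have h3 : ({C₁, C₂, C₃} : Set (Finset (ZMod p))).ncard = 3 := by
        rw [Set.ncard_insert_of_notMem (by simp [hne, Ne.symm h31]) (Set.toFinite _),
          Set.ncard_insert_of_notMem (by simp [Ne.symm h32]) (Set.toFinite _),
          Set.ncard_singleton]
      have hle : ({C₁, C₂, C₃} : Set (Finset (ZMod p))).ncard ≤ 2 :=
        le_trans (Set.ncard_le_ncard hsub (Set.toFinite _)) hc
      omega
    -- position of C₂ relative to C₁
    set t := ((b - a) * d⁻¹).val with ht
    have htc : ((t : ℕ) : ZMod p) = (b - a) * d⁻¹ := ZMod.natCast_rightInverse _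
    have hbt : b = a + (t : ℕ) • d := by
      rw [nsmul_eq_mul, htc]
      field_simp
      ring
    have htp : t < p := ZMod.val_lt _
    have haC₁ : a ∈ C₁ := by
      rw [hC₁eq]
      exact Finset.mem_image.2 ⟨0, Finset.mem_range.2 hm1, by simp⟩
    have hbC₂ : b ∈ C₂ := by
      rw [hC₂eq]
      exact Finset.mem_image.2 ⟨0, Finset.mem_range.2 hn1, by simp⟩
    have hmt : m ≤ t := by
      by_contra h
      push_neg at h
      have hbC₁ : b ∈ C₁ := by
        rw [hC₁eq]
        exact Finset.mem_image.2 ⟨t, Finset.mem_range.2 h, hbt.symm⟩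
      exact Finset.disjoint_left.1 hdisj hbC₁ hbC₂
    have htn : t + n ≤ p := by
      by_contra h
      push_neg at h
      have haC₂ : a ∈ C₂ := by
        rw [hC₂eq]
        refine Finset.mem_image.2 ⟨p - t, Finset.mem_range.2 (by omega), ?_⟩
        rw [hbt, st17_nsmul_sub d (le_of_lt htp)]
        simp only [nsmul_eq_mul, ZMod.natCast_self]
        ring
      exact Finset.disjoint_left.1 hdisj haC₁ haC₂
    have hcardmn : m + n ≤ Z.card := by
      have h1 : (C₁ ∪ C₂).card = m + n := by
        rw [Finset.card_union_of_disjoint hdisj, hC₁card, hC₂card]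
      have h2 : C₁ ∪ C₂ ⊆ Z := Finset.union_subset hC₁Z hC₂Z
      have := Finset.card_le_card h2
      omega
    refine st17_fit p hp2 hd0 a m n t hm1 hn1 hmt htn Z (by omega) ?_
    intro z hz
    rcases hcov2 z hz with hzC | hzC
    · rw [hC₁eq] at hzC
      obtain ⟨i, hi, heq⟩ := Finset.mem_image.1 hzC
      rw [Finset.mem_range] at hi
      exact Or.inl ⟨i, hi, heq.symm⟩
    · rw [hC₂eq] at hzC
      obtain ⟨j, hj, heq⟩ := Finset.mem_image.1 hzC
      rw [Finset.mem_range] at hj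
      refine Or.inr ⟨j, hj, ?_⟩
      rw [← heq, hbt, add_nsmul, add_assoc]
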